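/- Let F^{[1]},…,F^{[N]} : ℝ^D → ℝ^D be Lipschitz continuous maps of class C³, fix y^n ∈ ℝ^D, and consider an s-stage NSARK step with coefficient functions a_{ij}^{[ν]}(h), b_j^{[ν]}(h) satisfying a_{ij}^{[ν]}(h) = O(1) and b_j^{[ν]}(h) = O(1) as h → 0⁺, such that for each h in some interval (0,h₀] the stage equations possess a solution. If, as h → 0⁺, Σ_{j=1}^s b_j^{[ν]}(h) = 1 + O(h²) for every ν, and Σ_{i,j=1}^s b_i^{[μ]}(h) a_{ij}^{[ν]}(h) = 1/2 + O(h) for every μ, ν, then for every function u : ℝ → ℝ^D with u(0) = y^n and u'(t) = Σ_{ν=1}^N F^{[ν]}(u(t)) for all t, one has ‖y^{n+1}(h) − u(h)‖ = O(h³) as h → 0⁺; that is, the NSARK method is of order at least 2. -/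

import Mathlib

open Topology Asymptotics Filter Finset

section Helpers

variable {E₀ : Type*} [NormedAddCommGroup E₀] [NormedSpace ℝ E₀]

private lemma nsark_smul_const {α : Type*} {l : Filter α} (g : α → ℝ) (v : E₀) :
    (fun x => g x • v) =O[l] g := by
  apply IsBigO.of_bound ‖v‖
  filter_upwards with x
  rw [norm_smul, mul_comm]

private lemma nsark_of_bound {f : ℝ → E₀} {g : ℝ → ℝ} {C : ℝ}
    (hg : ∀ h ∈ Set.Ioi (0 : ℝ), 0 ≤ g h)
    (hf : ∀ᶠ h in 𝓝[>] (0 : ℝ), ‖f h‖ ≤ C * g h) :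
    f =O[𝓝[>] (0 : ℝ)] g := by
  apply IsBigO.of_bound C
  filter_upwards [hf, self_mem_nhdsWithin] with h h1 h2
  rwa [Real.norm_eq_abs, abs_of_nonneg (hg h h2)]

private lemma nsark_bdd {f : ℝ → ℝ}
    (h : f =O[𝓝[>] (0 : ℝ)] fun _ => (1 : ℝ)) :
    ∃ C, 0 ≤ C ∧ ∀ᶠ h in 𝓝[>] (0 : ℝ), |f h| ≤ C := by
  obtain ⟨c, hc⟩ := h.bound
  refine ⟨max c 0, le_max_right _ _, ?_⟩
  filter_upwards [hc] with x hx
  rw [Real.norm_eq_abs, norm_one, mul_one] at hx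
  exact hx.trans (le_max_left c 0)

end Helpers

set_option maxHeartbeats 2000000 in
/-- Second-order sufficiency for NSARK methods (Corollary 2.2 of
Izgin–Ketcheson–Meister, p = 2, sufficiency direction): if
Σ_j b_j^{[ν]}(h) = 1 + O(h²) for all ν and
Σ_{i,j} b_i^{[μ]}(h) a_{ij}^{[ν]}(h) = 1/2 + O(h) for all μ, ν, then the
NSARK method is of order at least 2. -/
theorem stmt19 (D N s : ℕ)
    (F : Fin N → (Fin D → ℝ) → (Fin D → ℝ))
    (hFL : ∀ ν, ∃ K, LipschitzWith K (F ν))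
    (hFC : ∀ ν, ContDiff ℝ 3 (F ν))
    (yn : Fin D → ℝ)
    (A : ℝ → Fin s → Fin s → Fin N → ℝ) (B : ℝ → Fin s → Fin N → ℝ)
    (hA : ∀ i j ν, (fun h => A h i j ν) =O[𝓝[>] (0 : ℝ)] fun _ => (1 : ℝ))
    (hB : ∀ j ν, (fun h => B h j ν) =O[𝓝[>] (0 : ℝ)] fun _ => (1 : ℝ))
    (Y : ℝ → Fin s → (Fin D → ℝ)) (ynext : ℝ → (Fin D → ℝ))
    (hstep : ∃ h₀ > (0 : ℝ), ∀ h ∈ Set.Ioc (0 : ℝ) h₀,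
      (∀ i, Y h i = yn + h • ∑ j, ∑ ν, A h i j ν • F ν (Y h j)) ∧
      ynext h = yn + h • ∑ j, ∑ ν, B h j ν • F ν (Y h j))
    (hcond1 : ∀ ν, (fun h => (∑ j, B h j ν) - 1)
      =O[𝓝[>] (0 : ℝ)] fun h => h ^ 2)
    (hcond2 : ∀ μ ν, (fun h => (∑ i, ∑ j, B h i μ * A h i j ν) - 1 / 2)
      =O[𝓝[>] (0 : ℝ)] fun h => h) :
    ∀ u : ℝ → (Fin D → ℝ), u 0 = yn →
      (∀ t, HasDerivAt u (∑ ν, F ν (u t)) t) →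
      (fun h => ynext h - u h) =O[𝓝[>] (0 : ℝ)] fun h => h ^ 3 := by
  intro u hu0 hu'
  obtain ⟨h₀, h₀pos, hstep⟩ := hstep
  set l : Filter ℝ := 𝓝[>] (0 : ℝ) with hl
  -- the Taylor polynomial increment of degree 2
  set T : ℝ → (Fin D → ℝ) := fun h =>
    h • (∑ ν, F ν yn) + (h ^ 2 / 2) • ∑ ν, ∑ μ, fderiv ℝ (F ν) yn (F μ yn) with hT
  -- uniform bounds on the coefficients
  have hCA : ∃ C, 0 ≤ C ∧ ∀ᶠ h in l, ∀ i j ν, |A h i j ν| ≤ C := by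
    have SAo : (fun h => ∑ i, ∑ j, ∑ ν, |A h i j ν|) =O[l] fun _ => (1 : ℝ) :=
      IsBigO.fun_sum fun i _ => IsBigO.fun_sum fun j _ => IsBigO.fun_sum fun ν _ => (hA i j ν).abs_left
    obtain ⟨C, C0, hC⟩ := nsark_bdd SAo
    refine ⟨C, C0, ?_⟩
    filter_upwards [hC] with h hh i j ν
    have nn : 0 ≤ ∑ i, ∑ j, ∑ ν, |A h i j ν| := by positivity
    rw [abs_of_nonneg nn] at hh
    refine le_trans ?_ hh
    calc |A h i j ν| ≤ ∑ ν, |A h i j ν| :=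
          Finset.single_le_sum (f := fun ν => |A h i j ν|) (fun _ _ => abs_nonneg _) (mem_univ ν)
      _ ≤ ∑ j, ∑ ν, |A h i j ν| :=
          Finset.single_le_sum (f := fun j => ∑ ν, |A h i j ν|)
            (fun _ _ => Finset.sum_nonneg fun _ _ => abs_nonneg _) (mem_univ j)
      _ ≤ ∑ i, ∑ j, ∑ ν, |A h i j ν| :=
          Finset.single_le_sum (f := fun i => ∑ j, ∑ ν, |A h i j ν|)
            (fun _ _ => Finset.sum_nonneg fun _ _ => Finset.sum_nonneg fun _ _ => abs_nonneg _)
            (mem_univ i)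
  have hCB : ∃ C, 0 ≤ C ∧ ∀ᶠ h in l, ∀ j ν, |B h j ν| ≤ C := by
    have SBo : (fun h => ∑ j, ∑ ν, |B h j ν|) =O[l] fun _ => (1 : ℝ) :=
      IsBigO.fun_sum fun j _ => IsBigO.fun_sum fun ν _ => (hB j ν).abs_left
    obtain ⟨C, C0, hC⟩ := nsark_bdd SBo
    refine ⟨C, C0, ?_⟩
    filter_upwards [hC] with h hh j ν
    have nn : 0 ≤ ∑ j, ∑ ν, |B h j ν| := by positivity
    rw [abs_of_nonneg nn] at hh
    refine le_trans ?_ hh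
    calc |B h j ν| ≤ ∑ ν, |B h j ν| :=
          Finset.single_le_sum (f := fun ν => |B h j ν|) (fun _ _ => abs_nonneg _) (mem_univ ν)
      _ ≤ ∑ j, ∑ ν, |B h j ν| :=
          Finset.single_le_sum (f := fun j => ∑ ν, |B h j ν|)
            (fun _ _ => Finset.sum_nonneg fun _ _ => abs_nonneg _) (mem_univ j)
  obtain ⟨CA, CA0, hCA⟩ := hCA
  obtain ⟨CB, CB0, hCB⟩ := hCB
  -- Lipschitz constants
  choose K hK using hFL
  set KS : ℝ := ∑ ν, (K ν : ℝ) with hKS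
  have KS0 : 0 ≤ KS := Finset.sum_nonneg fun ν _ => (K ν).2
  have hKS' : ∀ ν x y, ‖F ν x - F ν y‖ ≤ KS * ‖x - y‖ := by
    intro ν x y
    have h1 := (hK ν).dist_le_mul x y
    rw [dist_eq_norm, dist_eq_norm] at h1
    refine h1.trans ?_
    gcongr
    exact Finset.single_le_sum (f := fun ν => ((K ν : ℝ))) (fun ν _ => (K ν).2) (mem_univ ν)
  set CF : ℝ := ∑ ν, ‖F ν yn‖ with hCF
  have CF0 : 0 ≤ CF := Finset.sum_nonneg fun ν _ => norm_nonneg _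
  have hCF' : ∀ ν, ‖F ν yn‖ ≤ CF :=
    fun ν => Finset.single_le_sum (f := fun ν => ‖F ν yn‖) (fun ν _ => norm_nonneg _) (mem_univ ν)
  -- bound on the stages
  have hYb : ∃ C, 0 ≤ C ∧ ∀ᶠ h in l, ∀ i, ‖Y h i - yn‖ ≤ C * h := by
    set c1 : ℝ := (s : ℝ) * ((N : ℝ) * CA * ((s : ℝ) * CF)) with hc1def
    set c2 : ℝ := (s : ℝ) * ((N : ℝ) * CA * KS) with hc2def
    have c10 : 0 ≤ c1 := by positivity
    have c20 : 0 ≤ c2 := by positivity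
    set δ : ℝ := min h₀ (1 / (2 * (c2 + 1))) with hδdef
    have δpos : 0 < δ := lt_min h₀pos (by positivity)
    refine ⟨2 * c1, by positivity, ?_⟩
    filter_upwards [hCA, Ioc_mem_nhdsGT_of_mem ⟨le_refl (0 : ℝ), δpos⟩] with h hA' hδ
    have hpos : 0 < h := hδ.1
    have hIoc : h ∈ Set.Ioc (0 : ℝ) h₀ := ⟨hpos, hδ.2.trans (min_le_left _ _)⟩
    set m : ℝ := ∑ j, ‖Y h j - yn‖ with hmdef
    have m0 : 0 ≤ m := Finset.sum_nonneg fun _ _ => norm_nonneg _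
    have wm : ∀ jj, ‖Y h jj - yn‖ ≤ m := fun jj =>
      Finset.single_le_sum (f := fun j => ‖Y h j - yn‖) (fun _ _ => norm_nonneg _) (mem_univ jj)
    have est : ∀ i, ‖Y h i - yn‖ ≤
        h * (∑ j, ∑ _ν : Fin N, CA * (CF + KS * ‖Y h j - yn‖)) := by
      intro i
      have e2 : Y h i - yn = h • ∑ j, ∑ ν, A h i j ν • F ν (Y h j) := by
        rw [(hstep h hIoc).1 i]; exact add_sub_cancel_left _ _
      rw [e2, norm_smul, Real.norm_eq_abs, abs_of_pos hpos]
      gcongr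
      calc ‖∑ j, ∑ ν, A h i j ν • F ν (Y h j)‖
          ≤ ∑ j, ‖∑ ν, A h i j ν • F ν (Y h j)‖ := norm_sum_le _ _
        _ ≤ ∑ j, ∑ ν, ‖A h i j ν • F ν (Y h j)‖ :=
            Finset.sum_le_sum fun j _ => norm_sum_le _ _
        _ ≤ ∑ j, ∑ _ν : Fin N, CA * (CF + KS * ‖Y h j - yn‖) := by
            refine Finset.sum_le_sum fun j _ => Finset.sum_le_sum fun ν _ => ?_
            rw [norm_smul, Real.norm_eq_abs]
            have hF : ‖F ν (Y h j)‖ ≤ CF + KS * ‖Y h j - yn‖ := by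
              have h1 : ‖F ν (Y h j)‖ ≤ ‖F ν yn‖ + ‖F ν (Y h j) - F ν yn‖ := by
                have := norm_add_le (F ν yn) (F ν (Y h j) - F ν yn)
                simpa using this
              exact h1.trans (add_le_add (hCF' ν) (hKS' ν _ _))
            exact mul_le_mul (hA' i j ν) hF (norm_nonneg _) CA0
    have mineq : m ≤ h * c1 + h * c2 * m := by
      have e1 : m ≤ ∑ _i : Fin s, h * (∑ j, ∑ _ν : Fin N, CA * (CF + KS * ‖Y h j - yn‖)) :=
        Finset.sum_le_sum fun i _ => est i
      have e2 : ∑ _i : Fin s, h * (∑ j, ∑ _ν : Fin N, CA * (CF + KS * ‖Y h j - yn‖))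
          = h * c1 + h * c2 * m := by
        have e3 : ∀ j : Fin s, ∑ _ν : Fin N, CA * (CF + KS * ‖Y h j - yn‖)
            = (N : ℝ) * CA * CF + (N : ℝ) * CA * KS * ‖Y h j - yn‖ := fun j => by
          rw [Finset.sum_const, Finset.card_univ, Fintype.card_fin, nsmul_eq_mul]; ring
        rw [Finset.sum_const, Finset.card_univ, Fintype.card_fin, nsmul_eq_mul,
          Finset.sum_congr rfl fun j _ => e3 j, Finset.sum_add_distrib, Finset.sum_const,
          Finset.card_univ, Fintype.card_fin, nsmul_eq_mul, ← Finset.mul_sum, ← hmdef,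
          hc1def, hc2def]
        ring
      linarith [e1, e2.le, e2.ge]
    have hc2h : h * c2 ≤ 1 / 2 := by
      have hle : h ≤ 1 / (2 * (c2 + 1)) := hδ.2.trans (min_le_right _ _)
      have hp2 : (0:ℝ) < 2 * (c2 + 1) := by positivity
      calc h * c2 ≤ (1 / (2 * (c2 + 1))) * c2 := by gcongr
        _ ≤ 1 / 2 := by
            rw [div_mul_eq_mul_div, one_mul, div_le_div_iff₀ hp2 (by norm_num)]
            nlinarith
    have mfin : m ≤ 2 * c1 * h := by
      nlinarith [mul_le_mul_of_nonneg_right hc2h m0]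
    intro i
    exact (wm i).trans mfin
  obtain ⟨CY, CY0, hYb⟩ := hYb
  -- first order error of the stage values
  have hEb : ∀ᶠ h in l, ∀ μ k, ‖F μ (Y h k) - F μ yn‖ ≤ KS * CY * h := by
    filter_upwards [hYb, self_mem_nhdsWithin] with h h1 h2
    intro μ k
    calc ‖F μ (Y h k) - F μ yn‖ ≤ KS * ‖Y h k - yn‖ := hKS' μ _ _
      _ ≤ KS * (CY * h) := by gcongr; exact h1 k
      _ = KS * CY * h := by ring
  -- second order Taylor remainder of F ν at the stages
  have hRb : ∀ ν, ∃ C, 0 ≤ C ∧ ∀ᶠ h in l, ∀ j,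
      ‖F ν (Y h j) - F ν yn - fderiv ℝ (F ν) yn (Y h j - yn)‖ ≤ C * h ^ 2 := by
    intro ν
    have hd : ContDiffAt ℝ 1 (fderiv ℝ (F ν)) yn :=
      ((hFC ν).fderiv_right (m := 1) (by norm_num)).contDiffAt
    obtain ⟨K', t, ht, hlip⟩ := hd.exists_lipschitzOnWith
    obtain ⟨ε, εpos, hball⟩ := Metric.mem_nhds_iff.1 ht
    have quad : ∀ x : Fin D → ℝ, ‖x - yn‖ ≤ ε / 2 →
        ‖F ν x - F ν yn - fderiv ℝ (F ν) yn (x - yn)‖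
          ≤ (K' : ℝ) * ‖x - yn‖ * ‖x - yn‖ := by
      intro x hx
      have hconv : Convex ℝ (Metric.closedBall yn ‖x - yn‖) := convex_closedBall _ _
      have hsub : Metric.closedBall yn ‖x - yn‖ ⊆ t := by
        intro z hz
        apply hball
        rw [Metric.mem_closedBall] at hz
        rw [Metric.mem_ball]
        calc dist z yn ≤ ‖x - yn‖ := hz
          _ ≤ ε / 2 := hx
          _ < ε := by linarith
      have hdiff : ∀ z ∈ Metric.closedBall yn ‖x - yn‖, DifferentiableAt ℝ (F ν) z :=
        fun z _ => ((hFC ν).differentiable (by norm_num)) z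
      have hbound : ∀ z ∈ Metric.closedBall yn ‖x - yn‖,
          ‖fderiv ℝ (F ν) z - fderiv ℝ (F ν) yn‖ ≤ (K' : ℝ) * ‖x - yn‖ := by
        intro z hz
        rw [← dist_eq_norm]
        have hzt : z ∈ t := hsub hz
        have hyt : yn ∈ t := hball (Metric.mem_ball_self εpos)
        calc dist (fderiv ℝ (F ν) z) (fderiv ℝ (F ν) yn) ≤ (K' : ℝ) * dist z yn :=
              (lipschitzOnWith_iff_dist_le_mul.1 hlip) z hzt yn hyt
          _ ≤ (K' : ℝ) * ‖x - yn‖ := by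
              have := Metric.mem_closedBall.1 hz
              gcongr
      have xmem : x ∈ Metric.closedBall yn ‖x - yn‖ := by
        rw [Metric.mem_closedBall, dist_eq_norm]
      have ymem : yn ∈ Metric.closedBall yn ‖x - yn‖ :=
        Metric.mem_closedBall_self (norm_nonneg _)
      exact hconv.norm_image_sub_le_of_norm_fderiv_le' hdiff hbound ymem xmem
    set δ' : ℝ := ε / (2 * (CY + 1)) with hδ'def
    have δ'pos : 0 < δ' := by positivity
    refine ⟨(K' : ℝ) * CY * CY, by positivity, ?_⟩
    filter_upwards [hYb, Ioc_mem_nhdsGT_of_mem ⟨le_refl (0 : ℝ), δ'pos⟩] with h h1 h2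
    intro j
    have hpos : 0 < h := h2.1
    have hYj : ‖Y h j - yn‖ ≤ CY * h := h1 j
    have hxn : ‖Y h j - yn‖ ≤ ε / 2 := by
      have c1 : CY * h ≤ CY * δ' := mul_le_mul_of_nonneg_left h2.2 CY0
      have c2 : CY * δ' ≤ ε / 2 := by
        rw [hδ'def, ← mul_div_assoc, div_le_div_iff₀ (by positivity) (by norm_num)]
        nlinarith [εpos.le, CY0]
      exact hYj.trans (c1.trans c2)
    calc ‖F ν (Y h j) - F ν yn - fderiv ℝ (F ν) yn (Y h j - yn)‖
        ≤ (K' : ℝ) * ‖Y h j - yn‖ * ‖Y h j - yn‖ := quad _ hxn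
      _ ≤ (K' : ℝ) * (CY * h) * (CY * h) := by
          have := norm_nonneg (Y h j - yn)
          gcongr
      _ = (K' : ℝ) * CY * CY * h ^ 2 := by ring
  -- Taylor expansion of the exact solution
  have hU : (fun h => u h - (yn + T h)) =O[l] fun h => h ^ 3 := by
    set G : (Fin D → ℝ) → (Fin D → ℝ) := fun y => ∑ ν, F ν y with hGdef
    have hG : ContDiff ℝ 3 G := ContDiff.sum fun ν _ => hFC ν
    have hud : Differentiable ℝ u := fun t => (hu' t).differentiableAt
    have hdu : deriv u = fun t => G (u t) := funext fun t => (hu' t).deriv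
    have hu1 : ContDiff ℝ 1 u := contDiff_one_iff_deriv.2 ⟨hud, by
      rw [hdu]; exact hG.continuous.comp hud.continuous⟩
    have hu2 : ContDiff ℝ 2 u := by
      rw [show (2 : WithTop ℕ∞) = 1 + 1 from rfl, contDiff_succ_iff_deriv]
      refine ⟨hud, by simp, ?_⟩
      rw [hdu]; exact (hG.of_le (by norm_num)).comp hu1
    have hu3 : ContDiff ℝ 3 u := by
      rw [show (3 : WithTop ℕ∞) = 2 + 1 from rfl, contDiff_succ_iff_deriv]
      refine ⟨hud, by simp, ?_⟩
      rw [hdu]; exact (hG.of_le (by norm_num)).comp hu2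
    have hd2 : ∀ t : ℝ, HasDerivAt (deriv u) (fderiv ℝ G (u t) (G (u t))) t := by
      intro t
      rw [hdu]
      have h1 : HasFDerivAt G (fderiv ℝ G (u t)) (u t) :=
        (hG.differentiable (by norm_num) (u t)).hasFDerivAt
      exact h1.comp_hasDerivAt t (hu' t)
    have hcont : ContDiffOn ℝ ((2 : ℕ) + 1) u (Set.Icc 0 h₀) :=
      (hu3.contDiffOn).of_le (by norm_num)
    obtain ⟨C, hC⟩ := exists_taylor_mean_remainder_bound (le_of_lt h₀pos) hcont
    have uD : UniqueDiffOn ℝ (Set.Icc (0 : ℝ) h₀) := uniqueDiffOn_Icc h₀pos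
    have mem0 : (0 : ℝ) ∈ Set.Icc (0 : ℝ) h₀ := ⟨le_refl _, h₀pos.le⟩
    have i1 : iteratedDerivWithin 1 u (Set.Icc 0 h₀) 0 = ∑ ν, F ν yn := by
      rw [iteratedDerivWithin_one, (hud 0).derivWithin (uD 0 mem0), hdu]
      simp [hGdef, hu0]
    have i2 : iteratedDerivWithin 2 u (Set.Icc 0 h₀) 0 = fderiv ℝ G yn (G yn) := by
      rw [show (2 : ℕ) = 1 + 1 from rfl, iteratedDerivWithin_succ]
      have e : Set.EqOn (iteratedDerivWithin 1 u (Set.Icc 0 h₀)) (deriv u)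
          (Set.Icc 0 h₀) := by
        intro x hx
        rw [iteratedDerivWithin_one, (hud x).derivWithin (uD x hx)]
      rw [derivWithin_congr e (e mem0),
        (hd2 0).differentiableAt.derivWithin (uD 0 mem0), (hd2 0).deriv, hu0]
    have fG : fderiv ℝ G yn (G yn) = ∑ ν, ∑ μ, fderiv ℝ (F ν) yn (F μ yn) := by
      have hdf : ∀ ν : Fin N, DifferentiableAt ℝ (F ν) yn := fun ν =>
        ((hFC ν).differentiable (by norm_num)) yn
      rw [hGdef, fderiv_fun_sum fun ν _ => hdf ν]
      simp only [ContinuousLinearMap.sum_apply, map_sum]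
      exact Finset.sum_comm
    have tay : ∀ x : ℝ, taylorWithinEval u 2 (Set.Icc 0 h₀) 0 x = yn + T x := by
      intro x
      rw [taylor_within_apply, Finset.sum_range_succ, Finset.sum_range_succ,
        Finset.sum_range_one, iteratedDerivWithin_zero, i1, i2, fG, hT, hu0]
      norm_num [Nat.factorial]
      module
    refine nsark_of_bound (C := C) (fun x hx => pow_nonneg (le_of_lt hx) 3) ?_
    filter_upwards [Ioc_mem_nhdsGT_of_mem ⟨le_refl (0 : ℝ), h₀pos⟩] with h hh
    have hb := hC h ⟨hh.1.le, hh.2⟩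
    rw [tay h] at hb
    simpa using hb
  -- expansion of the numerical method
  have hM : (fun h => ynext h - (yn + T h)) =O[l] fun h => h ^ 3 := by
    choose CR CR0 hCRb using hRb
    -- the four error terms
    have o1 : (fun h => h • ∑ ν, ((∑ j, B h j ν) - 1) • F ν yn : ℝ → (Fin D → ℝ)) =O[l] fun h => h ^ 3 := by
      have inner : (fun h => ∑ ν, ((∑ j, B h j ν) - 1) • F ν yn) =O[l] fun h => h ^ 2 :=
        IsBigO.fun_sum fun ν _ => (nsark_smul_const _ (F ν yn)).trans (hcond1 ν)
      have o := (isBigO_refl (fun h : ℝ => h) l).smul inner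
      refine o.trans (IsBigO.of_bound 1 ?_)
      filter_upwards with x
      simp [smul_eq_mul, ← pow_succ', abs_pow]
    have o2 : (fun h => (h ^ 2) • ∑ ν, ∑ μ, ((∑ j, ∑ k, B h j ν * A h j k μ) - 1 / 2) • (fderiv ℝ (F ν) yn) (F μ yn) : ℝ → (Fin D → ℝ)) =O[l] fun h => h ^ 3 := by
      have inner : (fun h => ∑ ν, ∑ μ, ((∑ j, ∑ k, B h j ν * A h j k μ) - 1 / 2) •
          (fderiv ℝ (F ν) yn) (F μ yn)) =O[l] fun h => h :=
        IsBigO.fun_sum fun ν _ => IsBigO.fun_sum fun μ _ =>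
          (nsark_smul_const _ _).trans (hcond2 ν μ)
      have o := (isBigO_refl (fun h : ℝ => h ^ 2) l).smul inner
      refine o.trans (IsBigO.of_bound 1 ?_)
      filter_upwards with x
      simp [smul_eq_mul, ← pow_succ, abs_pow]
    have o3 : (fun h => (h ^ 2) • ∑ j, ∑ ν, ∑ k, ∑ μ, (B h j ν * A h j k μ) • (fderiv ℝ (F ν) yn) (F μ (Y h k) - F μ yn) : ℝ → (Fin D → ℝ)) =O[l] fun h => h ^ 3 := by
      have inner : (fun h => ∑ j, ∑ ν, ∑ k, ∑ μ, (B h j ν * A h j k μ) •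
          (fderiv ℝ (F ν) yn) (F μ (Y h k) - F μ yn)) =O[l] fun h => h := by
        refine IsBigO.fun_sum fun j _ => IsBigO.fun_sum fun ν _ => IsBigO.fun_sum fun k _ =>
          IsBigO.fun_sum fun μ _ => ?_
        have c1 : (fun h => B h j ν * A h j k μ) =O[l] fun _ => (1 : ℝ) := by
          simpa using (hB j ν).mul (hA j k μ)
        have c2 : (fun h => (fderiv ℝ (F ν) yn) (F μ (Y h k) - F μ yn)) =O[l]
            fun h => h := by
          refine ((fderiv ℝ (F ν) yn).isBigO_comp _ l).trans ?_
          refine nsark_of_bound (C := KS * CY) (fun x hx => le_of_lt hx) ?_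
          filter_upwards [hEb] with h hh
          exact hh μ k
        simpa using c1.smul c2
      have o := (isBigO_refl (fun h : ℝ => h ^ 2) l).smul inner
      refine o.trans (IsBigO.of_bound 1 ?_)
      filter_upwards with x
      simp [smul_eq_mul, ← pow_succ, abs_pow]
    have o4 : (fun h => h • ∑ j, ∑ ν, B h j ν • (F ν (Y h j) - F ν yn - (fderiv ℝ (F ν) yn) (Y h j - yn)) : ℝ → (Fin D → ℝ)) =O[l] fun h => h ^ 3 := by
      have inner : (fun h => ∑ j, ∑ ν, B h j ν •
          (F ν (Y h j) - F ν yn - (fderiv ℝ (F ν) yn) (Y h j - yn))) =O[l]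
          fun h => h ^ 2 := by
        refine IsBigO.fun_sum fun j _ => IsBigO.fun_sum fun ν _ => ?_
        have c2 : (fun h => F ν (Y h j) - F ν yn - (fderiv ℝ (F ν) yn) (Y h j - yn))
            =O[l] fun h => h ^ 2 := by
          refine nsark_of_bound (C := CR ν) (fun x hx => pow_nonneg (le_of_lt hx) 2) ?_
          filter_upwards [hCRb ν] with h hh
          exact hh j
        simpa using (hB j ν).smul c2
      have o := (isBigO_refl (fun h : ℝ => h) l).smul inner
      refine o.trans (IsBigO.of_bound 1 ?_)
      filter_upwards with x
      simp [smul_eq_mul, ← pow_succ', abs_pow]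
    -- the key algebraic identity
    have key : ∀ h ∈ Set.Ioc (0 : ℝ) h₀, ynext h - (yn + T h) =
        (fun h => h • ∑ ν, ((∑ j, B h j ν) - 1) • F ν yn) h + (fun h => (h ^ 2) • ∑ ν, ∑ μ, ((∑ j, ∑ k, B h j ν * A h j k μ) - 1 / 2) • (fderiv ℝ (F ν) yn) (F μ yn)) h + (fun h => (h ^ 2) • ∑ j, ∑ ν, ∑ k, ∑ μ, (B h j ν * A h j k μ) • (fderiv ℝ (F ν) yn) (F μ (Y h k) - F μ yn)) h + (fun h => h • ∑ j, ∑ ν, B h j ν • (F ν (Y h j) - F ν yn - (fderiv ℝ (F ν) yn) (Y h j - yn))) h := by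
      intro h hh
      beta_reduce
      obtain ⟨hYe, hne⟩ := hstep h hh
      have stage : ∀ j, Y h j - yn = h • ∑ k, ∑ μ, A h j k μ • F μ (Y h k) := fun j => by
        rw [hYe j]; exact add_sub_cancel_left _ _
      have pull : ∀ (b : ℝ) (c : Fin s → Fin N → ℝ) (v : Fin s → Fin N → (Fin D → ℝ)),
          b • (h • ∑ k, ∑ μ, c k μ • v k μ) = h • ∑ k, ∑ μ, (b * c k μ) • v k μ := by
        intro b c v
        rw [smul_comm b h]
        congr 1
        rw [Finset.smul_sum]
        refine Finset.sum_congr rfl fun k _ => ?_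
        rw [Finset.smul_sum]
        exact Finset.sum_congr rfl fun μ _ => smul_smul _ _ _
      have hsum : ∀ j ν, (∑ k, ∑ μ, A h j k μ • (fderiv ℝ (F ν) yn) (F μ (Y h k)))
          = (∑ k, ∑ μ, A h j k μ • (fderiv ℝ (F ν) yn) (F μ yn))
          + ∑ k, ∑ μ, A h j k μ • (fderiv ℝ (F ν) yn) (F μ (Y h k) - F μ yn) := by
        intro j ν
        rw [← Finset.sum_add_distrib]
        refine Finset.sum_congr rfl fun k _ => ?_
        rw [← Finset.sum_add_distrib]
        refine Finset.sum_congr rfl fun μ _ => ?_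
        rw [← smul_add, ← map_add]
        congr 2
        abel
      have hBD : ∀ j ν, B h j ν • (fderiv ℝ (F ν) yn) (Y h j - yn)
          = h • (∑ k, ∑ μ, (B h j ν * A h j k μ) • (fderiv ℝ (F ν) yn) (F μ yn))
          + h • (∑ k, ∑ μ, (B h j ν * A h j k μ) •
              (fderiv ℝ (F ν) yn) (F μ (Y h k) - F μ yn)) := by
        intro j ν
        rw [stage j]
        simp only [map_smul, map_sum]
        rw [hsum j ν, smul_add, smul_add, pull, pull]
      have split : ∀ j ν, B h j ν • F ν (Y h j)
          = B h j ν • F ν yn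
          + (h • (∑ k, ∑ μ, (B h j ν * A h j k μ) • (fderiv ℝ (F ν) yn) (F μ yn))
            + h • (∑ k, ∑ μ, (B h j ν * A h j k μ) •
                (fderiv ℝ (F ν) yn) (F μ (Y h k) - F μ yn)))
          + B h j ν • (F ν (Y h j) - F ν yn - (fderiv ℝ (F ν) yn) (Y h j - yn)) := by
        intro j ν
        calc B h j ν • F ν (Y h j)
            = B h j ν • F ν yn + B h j ν • (fderiv ℝ (F ν) yn) (Y h j - yn)
              + B h j ν • (F ν (Y h j) - F ν yn - (fderiv ℝ (F ν) yn) (Y h j - yn)) := by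
              rw [← smul_add, ← smul_add]
              congr 1
              abel
          _ = _ := by rw [hBD j ν]
      have main : (∑ j, ∑ ν, B h j ν • F ν (Y h j))
          = (∑ j, ∑ ν, B h j ν • F ν yn)
          + (h • (∑ j, ∑ ν, ∑ k, ∑ μ, (B h j ν * A h j k μ) •
              (fderiv ℝ (F ν) yn) (F μ yn))
            + h • (∑ j, ∑ ν, ∑ k, ∑ μ, (B h j ν * A h j k μ) •
              (fderiv ℝ (F ν) yn) (F μ (Y h k) - F μ yn)))
          + ∑ j, ∑ ν, B h j ν •
              (F ν (Y h j) - F ν yn - (fderiv ℝ (F ν) yn) (Y h j - yn)) := by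
        rw [Finset.sum_congr rfl fun j _ => Finset.sum_congr rfl fun ν _ => split j ν]
        simp only [Finset.sum_add_distrib, ← Finset.smul_sum]
      have re : (∑ j, ∑ ν, ∑ k, ∑ μ, (B h j ν * A h j k μ) •
            (fderiv ℝ (F ν) yn) (F μ yn))
          = ∑ ν, ∑ μ, (∑ j, ∑ k, B h j ν * A h j k μ) • (fderiv ℝ (F ν) yn) (F μ yn) := by
        rw [Finset.sum_comm]
        refine Finset.sum_congr rfl fun ν _ => ?_
        simp only [Finset.sum_smul]
        rw [Finset.sum_congr rfl fun j (_ : j ∈ univ) => Finset.sum_comm, Finset.sum_comm]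
      have eS1 : h • ∑ ν, ((∑ j, B h j ν) - 1) • F ν yn
          = h • (∑ j, ∑ ν, B h j ν • F ν yn) - h • ∑ ν, F ν yn := by
        rw [← smul_sub]
        congr 1
        rw [Finset.sum_comm, ← Finset.sum_sub_distrib]
        refine Finset.sum_congr rfl fun ν _ => ?_
        rw [sub_smul, one_smul, Finset.sum_smul]
      have eS2 : (h ^ 2) • ∑ ν, ∑ μ, ((∑ j, ∑ k, B h j ν * A h j k μ) - 1 / 2) •
            (fderiv ℝ (F ν) yn) (F μ yn)
          = h • (h • ∑ j, ∑ ν, ∑ k, ∑ μ, (B h j ν * A h j k μ) •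
              (fderiv ℝ (F ν) yn) (F μ yn))
            - (h ^ 2 / 2) • ∑ ν, ∑ μ, (fderiv ℝ (F ν) yn) (F μ yn) := by
        rw [smul_smul, ← pow_two, re, show h ^ 2 / 2 = h ^ 2 * (1 / 2) by ring,
          mul_smul, ← smul_sub]
        congr 1
        rw [Finset.smul_sum, ← Finset.sum_sub_distrib]
        refine Finset.sum_congr rfl fun ν _ => ?_
        rw [Finset.smul_sum, ← Finset.sum_sub_distrib]
        refine Finset.sum_congr rfl fun μ _ => ?_
        rw [sub_smul]
      have eS3 : (h ^ 2) • (∑ j, ∑ ν, ∑ k, ∑ μ, (B h j ν * A h j k μ) •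
            (fderiv ℝ (F ν) yn) (F μ (Y h k) - F μ yn))
          = h • (h • ∑ j, ∑ ν, ∑ k, ∑ μ, (B h j ν * A h j k μ) •
              (fderiv ℝ (F ν) yn) (F μ (Y h k) - F μ yn)) := by
        rw [smul_smul, ← pow_two]
      rw [hne, hT, main, eS1, eS2, eS3]
      simp only [smul_add]
      abel
    have keyev : (fun h => ynext h - (yn + T h)) =ᶠ[l]
        (fun h => (fun h => h • ∑ ν, ((∑ j, B h j ν) - 1) • F ν yn) h + (fun h => (h ^ 2) • ∑ ν, ∑ μ, ((∑ j, ∑ k, B h j ν * A h j k μ) - 1 / 2) • (fderiv ℝ (F ν) yn) (F μ yn)) h + (fun h => (h ^ 2) • ∑ j, ∑ ν, ∑ k, ∑ μ, (B h j ν * A h j k μ) • (fderiv ℝ (F ν) yn) (F μ (Y h k) - F μ yn)) h + (fun h => h • ∑ j, ∑ ν, B h j ν • (F ν (Y h j) - F ν yn - (fderiv ℝ (F ν) yn) (Y h j - yn))) h) := by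
      filter_upwards [Ioc_mem_nhdsGT_of_mem ⟨le_refl (0 : ℝ), h₀pos⟩] with h hh
      exact key h hh
    exact keyev.trans_isBigO (((o1.add o2).add o3).add o4)
  have := hM.sub hU
  refine this.congr_left fun h => ?_
  abel
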